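/- Let u, p, q, k : ℝ × ℝ → ℝ be continuous nonnegative functions on [0,∞)². Suppose u(t₁,t₂) ≤ p(t₁,t₂) + q(t₁,t₂)·∫₀^{t₁}∫₀^{t₂} k(s₁,s₂) u(s₁,s₂) ds₂ ds₁ for all t₁,t₂ ≥ 0. Define a = k·p, b = k·q, A(t₁,t₂) = ∫₀^{t₁}∫₀^{t₂} a(s₁,s₂) ds₂ ds₁, and c(t₁,t₂) = ∫₀^{t₂} b(t₁,s₂) ds₂. Then u(t₁,t₂) ≤ p(t₁,t₂) + q(t₁,t₂)·A(t₁,t₂)·exp(∫₀^{t₁} c(s₁,t₂) ds₁) for all t₁,t₂ ≥ 0. -/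

import Mathlib

open intervalIntegral Set

open MeasureTheory in
lemma hasDerivAt_primitive' {g : ℝ → ℝ} (hg : Continuous g) (t : ℝ) :
    HasDerivAt (fun x => ∫ s in (0:ℝ)..x, g s) (g t) t :=
  intervalIntegral.integral_hasDerivAt_right (hg.intervalIntegrable _ _)
    hg.aestronglyMeasurable.stronglyMeasurableAtFilter hg.continuousAt

lemma primitive_mono' {g : ℝ → ℝ} (hg : Continuous g) (hg0 : ∀ s, 0 ≤ g s) :
    Monotone (fun x => ∫ s in (0:ℝ)..x, g s) := by
  intro x y hxy
  have h1 := intervalIntegral.integral_add_adjacent_intervals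
    (hg.intervalIntegrable (μ := MeasureTheory.volume) 0 x)
    (hg.intervalIntegrable (μ := MeasureTheory.volume) x y)
  have h2 : 0 ≤ ∫ s in x..y, g s :=
    intervalIntegral.integral_nonneg hxy (fun s _ => hg0 s)
  simp only []
  linarith

lemma gronwall_aux (c W : ℝ → ℝ) (B T : ℝ) (hT : 0 ≤ T)
    (hc : Continuous c) (hW : Continuous W)
    (hc0 : ∀ t ∈ Icc (0:ℝ) T, 0 ≤ c t)
    (h : ∀ t ∈ Icc (0:ℝ) T, W t ≤ B + ∫ s in (0:ℝ)..t, c s * W s) :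
    W T ≤ B * Real.exp (∫ s in (0:ℝ)..T, c s) := by
  set R : ℝ → ℝ := fun t => ∫ s in (0:ℝ)..t, c s * W s with hR
  set C : ℝ → ℝ := fun t => ∫ s in (0:ℝ)..t, c s with hC
  have hcW : Continuous fun s => c s * W s := hc.mul hW
  have hRd : ∀ t, HasDerivAt R (c t * W t) t := hasDerivAt_primitive' hcW
  have hCd : ∀ t, HasDerivAt C (c t) t := hasDerivAt_primitive' hc
  set g : ℝ → ℝ := fun t => (B + R t) * Real.exp (-(C t)) with hg
  have hgd : ∀ t, HasDerivAt g
      ((c t * W t) * Real.exp (-(C t)) + (B + R t) * (Real.exp (-(C t)) * (-(c t)))) t := by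
    intro t
    exact ((hRd t).const_add B).mul ((hCd t).neg.exp)
  have hgc : Continuous g := by
    have : Differentiable ℝ g := fun t => (hgd t).differentiableAt
    exact this.continuous
  have hanti : AntitoneOn g (Icc 0 T) := by
    apply antitoneOn_of_deriv_nonpos (convex_Icc 0 T) hgc.continuousOn
    · intro x hx
      exact (hgd x).differentiableAt.differentiableWithinAt
    · intro x hx
      rw [interior_Icc] at hx
      rw [(hgd x).deriv]
      have hx' : x ∈ Icc (0:ℝ) T := Ioo_subset_Icc_self hx
      have h1 := h x hx'
      have h2 := hc0 x hx'
      have he : (0:ℝ) < Real.exp (-(C x)) := Real.exp_pos _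
      nlinarith [mul_le_mul_of_nonneg_left h1 h2,
        mul_le_mul_of_nonneg_right (mul_le_mul_of_nonneg_left h1 h2) he.le]
  have hgT : g T ≤ g 0 := hanti (left_mem_Icc.2 hT) (right_mem_Icc.2 hT) hT
  have hR0 : R 0 = 0 := intervalIntegral.integral_same
  have hC0 : C 0 = 0 := intervalIntegral.integral_same
  have hg0v : g 0 = B := by simp [hg, hR0, hC0]
  rw [hg0v] at hgT
  have hmul : Real.exp (-(C T)) * Real.exp (C T) = 1 := by
    rw [← Real.exp_add]; simp
  have hE : (0:ℝ) < Real.exp (C T) := Real.exp_pos _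
  have h3 : (B + R T) ≤ B * Real.exp (C T) := by
    have := mul_le_mul_of_nonneg_right hgT hE.le
    rw [mul_assoc, hmul, mul_one] at this
    exact this
  have h4 := h T (right_mem_Icc.2 hT)
  calc W T ≤ B + R T := h4
    _ ≤ B * Real.exp (C T) := h3

lemma pachpatte_cont
    (u p q k : ℝ → ℝ → ℝ)
    (hu : Continuous (fun z : ℝ × ℝ => u z.1 z.2))
    (hp : Continuous (fun z : ℝ × ℝ => p z.1 z.2))
    (hq : Continuous (fun z : ℝ × ℝ => q z.1 z.2))
    (hk : Continuous (fun z : ℝ × ℝ => k z.1 z.2))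
    (hu0 : ∀ t₁ t₂ : ℝ, 0 ≤ u t₁ t₂)
    (hq0 : ∀ t₁ t₂ : ℝ, 0 ≤ q t₁ t₂)
    (hk0 : ∀ t₁ t₂ : ℝ, 0 ≤ k t₁ t₂)
    (ha0 : ∀ t₁ t₂ : ℝ, 0 ≤ k t₁ t₂ * p t₁ t₂)
    (hineq : ∀ t₁ t₂ : ℝ, 0 ≤ t₁ → 0 ≤ t₂ →
      u t₁ t₂ ≤ p t₁ t₂ + q t₁ t₂ *
        ∫ s₁ in (0:ℝ)..t₁, ∫ s₂ in (0:ℝ)..t₂, k s₁ s₂ * u s₁ s₂) :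
    ∀ t₁ t₂ : ℝ, 0 ≤ t₁ → 0 ≤ t₂ →
      u t₁ t₂ ≤ p t₁ t₂ + q t₁ t₂ *
        (∫ s₁ in (0:ℝ)..t₁, ∫ s₂ in (0:ℝ)..t₂, k s₁ s₂ * p s₁ s₂) *
        Real.exp (∫ s₁ in (0:ℝ)..t₁, ∫ s₂ in (0:ℝ)..t₂, k s₁ s₂ * q s₁ s₂) := by
  intro t₁ t₂ ht₁ ht₂
  set F : ℝ → ℝ → ℝ := fun x y => k x y * u x y with hFdef
  set a : ℝ → ℝ → ℝ := fun x y => k x y * p x y with hadef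
  set b : ℝ → ℝ → ℝ := fun x y => k x y * q x y with hbdef
  have hFc : Continuous (Function.uncurry F) := hk.mul hu
  have hac : Continuous (Function.uncurry a) := hk.mul hp
  have hbc : Continuous (Function.uncurry b) := hk.mul hq
  -- sections are continuous
  have hsec : ∀ (f : ℝ → ℝ → ℝ), Continuous (Function.uncurry f) →
      ∀ x : ℝ, Continuous (f x) := by
    intro f hf x
    exact hf.comp (continuous_const.prodMk continuous_id)
  -- inner integrals
  have hinner : ∀ s₂ : ℝ, Continuous (fun x => ∫ y in (0:ℝ)..s₂, F x y) := fun s₂ =>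
    intervalIntegral.continuous_parametric_intervalIntegral_of_continuous' hFc 0 s₂
  have hinna : Continuous (fun x => ∫ y in (0:ℝ)..t₂, a x y) :=
    intervalIntegral.continuous_parametric_intervalIntegral_of_continuous' hac 0 t₂
  set c : ℝ → ℝ := fun x => ∫ y in (0:ℝ)..t₂, b x y with hcdef
  have hcc : Continuous c :=
    intervalIntegral.continuous_parametric_intervalIntegral_of_continuous' hbc 0 t₂
  set V : ℝ → ℝ → ℝ := fun s₁ s₂ => ∫ x in (0:ℝ)..s₁, ∫ y in (0:ℝ)..s₂, F x y with hVdef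
  set W : ℝ → ℝ := fun s₁ => V s₁ t₂ with hWdef
  have hWc : Continuous W := by
    have : Differentiable ℝ W := fun x => (hasDerivAt_primitive' (hinner t₂) x).differentiableAt
    exact this.continuous
  have hF0 : ∀ x y, 0 ≤ F x y := fun x y => mul_nonneg (hk0 x y) (hu0 x y)
  -- V monotone in second variable
  have hVmono : ∀ x s₂, 0 ≤ x → 0 ≤ s₂ → s₂ ≤ t₂ → V x s₂ ≤ V x t₂ := by
    intro x s₂ hx hs₂ hst
    apply intervalIntegral.integral_mono hx ((hinner s₂).intervalIntegrable 0 x)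
      ((hinner t₂).intervalIntegrable 0 x)
    intro z
    exact primitive_mono' (hsec F hFc z) (fun y => hF0 z y) hst
  -- u ≤ p + q * V
  have huV : ∀ x y, 0 ≤ x → 0 ≤ y → u x y ≤ p x y + q x y * V x y := fun x y hx hy =>
    hineq x y hx hy
  -- pointwise bound on F
  have hFbound : ∀ x y, 0 ≤ x → 0 ≤ y → y ≤ t₂ →
      F x y ≤ a x y + b x y * W x := by
    intro x y hx hy hyt
    have h1 : u x y ≤ p x y + q x y * V x y := huV x y hx hy
    have h2 : V x y ≤ W x := hVmono x y hx hy hyt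
    have : F x y ≤ k x y * (p x y + q x y * V x y) :=
      mul_le_mul_of_nonneg_left h1 (hk0 x y)
    have h3 : k x y * (q x y * V x y) ≤ k x y * (q x y * W x) := by
      apply mul_le_mul_of_nonneg_left _ (hk0 x y)
      exact mul_le_mul_of_nonneg_left h2 (hq0 x y)
    calc F x y ≤ k x y * (p x y + q x y * V x y) := this
      _ = a x y + k x y * (q x y * V x y) := by ring
      _ ≤ a x y + k x y * (q x y * W x) := by linarith
      _ = a x y + b x y * W x := by ring
  -- inner bound
  have hinner_bound : ∀ x, 0 ≤ x →
      (∫ y in (0:ℝ)..t₂, F x y) ≤ (∫ y in (0:ℝ)..t₂, a x y) + c x * W x := by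
    intro x hx
    have hle : (∫ y in (0:ℝ)..t₂, F x y) ≤ ∫ y in (0:ℝ)..t₂, (a x y + b x y * W x) := by
      apply intervalIntegral.integral_mono_on ht₂
      · exact (hsec F hFc x).intervalIntegrable 0 t₂
      · exact (((hsec a hac x)).add ((hsec b hbc x).mul continuous_const)).intervalIntegrable 0 t₂
      · intro y hy
        exact hFbound x y hx hy.1 hy.2
    have heq : (∫ y in (0:ℝ)..t₂, (a x y + b x y * W x))
        = (∫ y in (0:ℝ)..t₂, a x y) + c x * W x := by
      rw [intervalIntegral.integral_add (f := fun y => a x y) (g := fun y => b x y * W x)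
        ((hsec a hac x).intervalIntegrable 0 t₂)
        (((hsec b hbc x).mul continuous_const).intervalIntegrable 0 t₂)]
      rw [intervalIntegral.integral_mul_const]
    linarith [hle, heq.le]
  set B : ℝ := ∫ x in (0:ℝ)..t₁, ∫ y in (0:ℝ)..t₂, a x y with hBdef
  have hinna0 : ∀ x, 0 ≤ ∫ y in (0:ℝ)..t₂, a x y := fun x =>
    intervalIntegral.integral_nonneg ht₂ (fun y _ => ha0 x y)
  have hAmono : Monotone (fun r => ∫ x in (0:ℝ)..r, ∫ y in (0:ℝ)..t₂, a x y) :=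
    primitive_mono' hinna hinna0
  -- the Gronwall hypothesis
  have hWineq : ∀ r ∈ Icc (0:ℝ) t₁, W r ≤ B + ∫ x in (0:ℝ)..r, c x * W x := by
    intro r hr
    have h1 : W r ≤ ∫ x in (0:ℝ)..r, ((∫ y in (0:ℝ)..t₂, a x y) + c x * W x) := by
      apply intervalIntegral.integral_mono_on hr.1
      · exact (hinner t₂).intervalIntegrable 0 r
      · exact (hinna.add (hcc.mul hWc)).intervalIntegrable 0 r
      · intro x hx
        exact hinner_bound x hx.1
    have h2 : (∫ x in (0:ℝ)..r, ((∫ y in (0:ℝ)..t₂, a x y) + c x * W x))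
        = (∫ x in (0:ℝ)..r, ∫ y in (0:ℝ)..t₂, a x y) + ∫ x in (0:ℝ)..r, c x * W x := by
      exact intervalIntegral.integral_add (hinna.intervalIntegrable 0 r)
        ((hcc.mul hWc).intervalIntegrable 0 r)
    have h3 : (∫ x in (0:ℝ)..r, ∫ y in (0:ℝ)..t₂, a x y) ≤ B := hAmono hr.2
    linarith
  have hc0 : ∀ x ∈ Icc (0:ℝ) t₁, 0 ≤ c x := fun x _ =>
    intervalIntegral.integral_nonneg ht₂ (fun y _ => mul_nonneg (hk0 x y) (hq0 x y))
  have hgron := gronwall_aux c W B t₁ ht₁ hcc hWc hc0 hWineq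
  -- conclude
  have hfinal : u t₁ t₂ ≤ p t₁ t₂ + q t₁ t₂ * (B * Real.exp (∫ s in (0:ℝ)..t₁, c s)) := by
    have h1 := hineq t₁ t₂ ht₁ ht₂
    have h2 : q t₁ t₂ * W t₁ ≤ q t₁ t₂ * (B * Real.exp (∫ s in (0:ℝ)..t₁, c s)) :=
      mul_le_mul_of_nonneg_left hgron (hq0 t₁ t₂)
    have h3 : q t₁ t₂ * V t₁ t₂ = q t₁ t₂ * W t₁ := rfl
    linarith [h1, h2, h3.le]
  calc u t₁ t₂ ≤ p t₁ t₂ + q t₁ t₂ * (B * Real.exp (∫ s in (0:ℝ)..t₁, c s)) := hfinal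
    _ = p t₁ t₂ + q t₁ t₂ *
        (∫ s₁ in (0:ℝ)..t₁, ∫ s₂ in (0:ℝ)..t₂, k s₁ s₂ * p s₁ s₂) *
        Real.exp (∫ s₁ in (0:ℝ)..t₁, ∫ s₂ in (0:ℝ)..t₂, k s₁ s₂ * q s₁ s₂) := by
      rw [mul_assoc]

theorem pachpatte_separable_kernel_real
    (u p q k : ℝ → ℝ → ℝ)
    (hu : ContinuousOn (fun z : ℝ × ℝ => u z.1 z.2) (Ici 0 ×ˢ Ici 0))
    (hp : ContinuousOn (fun z : ℝ × ℝ => p z.1 z.2) (Ici 0 ×ˢ Ici 0))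
    (hq : ContinuousOn (fun z : ℝ × ℝ => q z.1 z.2) (Ici 0 ×ˢ Ici 0))
    (hk : ContinuousOn (fun z : ℝ × ℝ => k z.1 z.2) (Ici 0 ×ˢ Ici 0))
    (hu0 : ∀ t₁ t₂ : ℝ, 0 ≤ t₁ → 0 ≤ t₂ → 0 ≤ u t₁ t₂)
    (hp0 : ∀ t₁ t₂ : ℝ, 0 ≤ t₁ → 0 ≤ t₂ → 0 ≤ p t₁ t₂)
    (hq0 : ∀ t₁ t₂ : ℝ, 0 ≤ t₁ → 0 ≤ t₂ → 0 ≤ q t₁ t₂)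
    (hk0 : ∀ t₁ t₂ : ℝ, 0 ≤ t₁ → 0 ≤ t₂ → 0 ≤ k t₁ t₂)
    (hineq : ∀ t₁ t₂ : ℝ, 0 ≤ t₁ → 0 ≤ t₂ →
      u t₁ t₂ ≤ p t₁ t₂ + q t₁ t₂ *
        ∫ s₁ in (0:ℝ)..t₁, ∫ s₂ in (0:ℝ)..t₂, k s₁ s₂ * u s₁ s₂) :
    ∀ t₁ t₂ : ℝ, 0 ≤ t₁ → 0 ≤ t₂ →
      u t₁ t₂ ≤ p t₁ t₂ + q t₁ t₂ *
        (∫ s₁ in (0:ℝ)..t₁, ∫ s₂ in (0:ℝ)..t₂, k s₁ s₂ * p s₁ s₂) *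
        Real.exp (∫ s₁ in (0:ℝ)..t₁, ∫ s₂ in (0:ℝ)..t₂, k s₁ s₂ * q s₁ s₂) := by
  -- clamp to the nonnegative quadrant
  set cl : ℝ × ℝ → ℝ × ℝ := fun z => (max z.1 0, max z.2 0) with hcl
  have hclc : Continuous cl := (continuous_fst.max continuous_const).prodMk
    (continuous_snd.max continuous_const)
  have hclm : ∀ z : ℝ × ℝ, cl z ∈ Ici (0:ℝ) ×ˢ Ici (0:ℝ) := fun z =>
    show 0 ≤ max z.1 0 ∧ 0 ≤ max z.2 0 from ⟨le_max_right _ _, le_max_right _ _⟩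
  set u' : ℝ → ℝ → ℝ := fun x y => u (max x 0) (max y 0) with hu'
  set p' : ℝ → ℝ → ℝ := fun x y => p (max x 0) (max y 0) with hp'
  set q' : ℝ → ℝ → ℝ := fun x y => q (max x 0) (max y 0) with hq'
  set k' : ℝ → ℝ → ℝ := fun x y => k (max x 0) (max y 0) with hk'
  have hceq : ∀ (f : ℝ → ℝ → ℝ), ContinuousOn (fun z : ℝ × ℝ => f z.1 z.2)
      (Ici 0 ×ˢ Ici 0) → Continuous (fun z : ℝ × ℝ => f (max z.1 0) (max z.2 0)) := by
    intro f hf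
    exact hf.comp_continuous hclc hclm
  have heqon : ∀ (f : ℝ → ℝ → ℝ) (x y : ℝ), 0 ≤ x → 0 ≤ y →
      f (max x 0) (max y 0) = f x y := by
    intro f x y hx hy
    rw [max_eq_left hx, max_eq_left hy]
  -- double integrals agree on the quadrant
  have hint : ∀ (f g : ℝ → ℝ → ℝ) (s t : ℝ), 0 ≤ s → 0 ≤ t →
      (∫ x in (0:ℝ)..s, ∫ y in (0:ℝ)..t, f (max x 0) (max y 0) * g (max x 0) (max y 0))
      = ∫ x in (0:ℝ)..s, ∫ y in (0:ℝ)..t, f x y * g x y := by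
    intro f g s t hs ht
    apply intervalIntegral.integral_congr
    intro x hx
    rw [uIcc_of_le hs] at hx
    apply intervalIntegral.integral_congr
    intro y hy
    rw [uIcc_of_le ht] at hy
    simp only [max_eq_left hx.1, max_eq_left hy.1]
  have key := pachpatte_cont u' p' q' k' (hceq u hu) (hceq p hp) (hceq q hq) (hceq k hk)
    (fun x y => hu0 _ _ (le_max_right _ _) (le_max_right _ _))
    (fun x y => hq0 _ _ (le_max_right _ _) (le_max_right _ _))
    (fun x y => hk0 _ _ (le_max_right _ _) (le_max_right _ _))
    (fun x y => mul_nonneg (hk0 _ _ (le_max_right _ _) (le_max_right _ _))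
      (hp0 _ _ (le_max_right _ _) (le_max_right _ _)))
    (by
      intro x y hx hy
      have h1 := hineq x y hx hy
      have h2 := hint k u x y hx hy
      simp only [hu', hp', hq', hk']
      rw [heqon u x y hx hy, heqon p x y hx hy, heqon q x y hx hy, h2]
      exact h1)
  intro s t hs ht
  have h := key s t hs ht
  simp only [hu', hp', hq', hk'] at h
  rw [heqon u s t hs ht, heqon p s t hs ht, heqon q s t hs ht,
    hint k p s t hs ht, hint k q s t hs ht] at h
  exact h
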